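/- The set G := { s : End_R(V) | δ(s) is invertible } carries a group structure with multiplication ∗, identity element 0, and inverse map s ↦ −s ∘ δ(s)⁻¹; moreover δ : G → (End_R(V))ˣ, s ↦ δ(s), is a group homomorphism into the group of invertible endomorphisms. -/
import Mathlib


/- Let `R` be a commutative ring, `V` an `R`-module and `D = ∂ : V → V` an `R`-linear map
with `∂ ∘ ∂ = 0`.  In `Module.End R V`, multiplication is composition, so `s * t = s ∘ t`. -/

variable {R : Type*} [CommRing R] {V : Type*} [AddCommGroup V] [Module R V]

/-- `s ∗ t := s + t + s∘∂∘t + s∘t∘∂`. -/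
def mulStar (D s t : Module.End R V) : Module.End R V :=
  s + t + s * D * t + s * t * D

/-- `δ(s) := ∂∘s + s∘∂ + id`. -/
def dlt (D s : Module.End R V) : Module.End R V :=
  D * s + s * D + 1


lemma dlt_zero (D : Module.End R V) : dlt D 0 = 1 := by simp [dlt]

lemma dlt_mulStar (D : Module.End R V) (hD : D * D = 0) (s t : Module.End R V) :
    dlt D (mulStar D s t) = dlt D s * dlt D t := by
  have h2 : ∀ x : Module.End R V, D * (D * x) = 0 := fun x => by
    rw [← mul_assoc, hD, zero_mul]
  simp only [dlt, mulStar, mul_add, add_mul, mul_one, one_mul, mul_assoc, hD, h2,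
    mul_zero, zero_mul, add_zero, zero_add]
  abel

lemma mulStar_assoc (D : Module.End R V) (hD : D * D = 0) (a b c : Module.End R V) :
    mulStar D (mulStar D a b) c = mulStar D a (mulStar D b c) := by
  have h2 : ∀ x : Module.End R V, D * (D * x) = 0 := fun x => by
    rw [← mul_assoc, hD, zero_mul]
  simp only [mulStar, mul_add, add_mul, mul_one, one_mul, mul_assoc, hD, h2,
    mul_zero, zero_mul, add_zero, zero_add]
  abel

lemma mulStar_zero (D s : Module.End R V) : mulStar D s 0 = s := by simp [mulStar]
lemma zero_mulStar (D s : Module.End R V) : mulStar D 0 s = s := by simp [mulStar]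

lemma mulStar_inv_left (D s : Module.End R V) (hs : IsUnit (dlt D s)) :
    mulStar D (-(s * Ring.inverse (dlt D s))) s = 0 := by
  set u := Ring.inverse (dlt D s) with hu
  have h1 : u * dlt D s = 1 := Ring.inverse_mul_cancel _ hs
  have e : s * u * D * s + s * u * s * D + s * u = s := by
    conv_rhs => rw [← mul_one s, ← h1, ← mul_assoc]
    simp only [dlt, mul_add, mul_one, mul_assoc]
  have g : mulStar D (-(s * u)) s = s - (s * u * D * s + s * u * s * D + s * u) := by
    simp only [mulStar, neg_mul]; abel
  rw [g, e, sub_self]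

lemma isUnit_dlt_inv (D : Module.End R V) (hD : D * D = 0) (s : Module.End R V)
    (hs : IsUnit (dlt D s)) :
    IsUnit (dlt D (-(s * Ring.inverse (dlt D s)))) := by
  have hmul : dlt D (-(s * Ring.inverse (dlt D s))) * dlt D s = 1 := by
    rw [← dlt_mulStar D hD, mulStar_inv_left D s hs, dlt_zero]
  have h3 : dlt D (-(s * Ring.inverse (dlt D s))) = ↑hs.unit⁻¹ := by
    calc dlt D (-(s * Ring.inverse (dlt D s)))
        = dlt D (-(s * Ring.inverse (dlt D s))) * (↑hs.unit * ↑hs.unit⁻¹) := by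
          rw [Units.mul_inv, mul_one]
      _ = dlt D (-(s * Ring.inverse (dlt D s))) * dlt D s * ↑hs.unit⁻¹ := by
          rw [hs.unit_spec, ← mul_assoc]
      _ = ↑hs.unit⁻¹ := by rw [hmul, one_mul]
  rw [h3]; exact Units.isUnit _


/-- the set G = { s | δ(s) invertible } carries a group structure with
multiplication ∗, identity 0 and inverse s ↦ −s ∘ δ(s)⁻¹; moreover δ is a group
homomorphism from G to the group of invertible endomorphisms. -/
theorem group_structure (D : Module.End R V) (hD : D * D = 0) :
    ∃ g : Group {s : Module.End R V // IsUnit (dlt D s)},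
      (∀ a b : {s : Module.End R V // IsUnit (dlt D s)},
        ((g.mul a b : {s : Module.End R V // IsUnit (dlt D s)}) : Module.End R V)
          = mulStar D (a : Module.End R V) (b : Module.End R V)) ∧
      ((g.one : Module.End R V) = 0) ∧
      (∀ a : {s : Module.End R V // IsUnit (dlt D s)},
        ((g.inv a : {s : Module.End R V // IsUnit (dlt D s)}) : Module.End R V)
          = -((a : Module.End R V) * Ring.inverse (dlt D (a : Module.End R V)))) ∧
      ∃ φ : {s : Module.End R V // IsUnit (dlt D s)} → (Module.End R V)ˣ,
        (∀ a, ((φ a : (Module.End R V)ˣ) : Module.End R V) = dlt D (a : Module.End R V)) ∧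
        (∀ a b, φ (g.mul a b) = φ a * φ b) := by
  refine ⟨{ mul := fun a b => ⟨mulStar D a.1 b.1, by
              rw [dlt_mulStar D hD]; exact a.2.mul b.2⟩
          , one := ⟨0, by rw [dlt_zero]; exact isUnit_one⟩
          , inv := fun a => ⟨-(a.1 * Ring.inverse (dlt D a.1)), isUnit_dlt_inv D hD a.1 a.2⟩
          , mul_assoc := fun a b c => Subtype.ext (mulStar_assoc D hD a.1 b.1 c.1)
          , one_mul := fun a => Subtype.ext (zero_mulStar D a.1)
          , mul_one := fun a => Subtype.ext (mulStar_zero D a.1)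
          , inv_mul_cancel := fun a => Subtype.ext (mulStar_inv_left D a.1 a.2) },
    fun a b => rfl, rfl, fun a => rfl,
    fun a => a.2.unit, fun a => a.2.unit_spec,
    fun a b => Units.ext ?_⟩
  show ((Subtype.mk (mulStar D a.1 b.1) _ : {s : Module.End R V // IsUnit (dlt D s)}).2.unit :
      Module.End R V) = ↑(a.2.unit * b.2.unit)
  rw [IsUnit.unit_spec, Units.val_mul, a.2.unit_spec, b.2.unit_spec, dlt_mulStar D hD]
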